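/- If a characteristic function v on N = A ⊎ B ⊎ {i} depends only on the pair of counts (|S ∩ A|, |S ∩ B|, whether i ∈ S), then the Shapley value of player i equals Σ over pairs (a,b) with 0 ≤ a ≤ |A|, 0 ≤ b ≤ |B| of [ (1/n) C(n−1, a+b)⁻¹ C(|A|, a) C(|B|, b) ] · [ w(a, b, true) − w(a, b, false) ], where n = |N| and w(a, b, t) is the common value of v on coalitions with a elements of A, b elements of B, and i present iff t. Moreover, the weights (1/n) C(n−1, a+b)⁻¹ C(|A|, a) C(|B|, b) sum to 1 over all (a,b). -/

import Mathlib

open Finset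

section Helpers
variable {α : Type*} [Fintype α] [DecidableEq α] (i : α) (T : Finset α)

private def pmap (σ : ↥T ≃ Fin T.card) (τ : {x : α // x ∉ T ∧ x ≠ i} ≃ Fin (Fintype.card α - 1 - T.card))
    (hjn : T.card + 1 ≤ Fintype.card α) : α → Fin (Fintype.card α) := fun x =>
  if h : x ∈ T then ⟨σ ⟨x, h⟩, by have := (σ ⟨x, h⟩).isLt; omega⟩
  else if h2 : x = i then ⟨T.card, by omega⟩
  else ⟨T.card + 1 + τ ⟨x, h, h2⟩, by have := (τ ⟨x, h, h2⟩).isLt; omega⟩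

variable {i T}

private lemma pmap_mem {σ} {τ} {hjn} {x : α} (h : x ∈ T) :
    (pmap i T σ τ hjn x : ℕ) = σ ⟨x, h⟩ := by simp [pmap, h]

private lemma pmap_i {σ} {τ} {hjn} (hiT : i ∉ T) :
    (pmap i T σ τ hjn i : ℕ) = T.card := by simp [pmap, hiT]

private lemma pmap_other {σ} {τ} {hjn} {x : α} (h : x ∉ T) (h2 : x ≠ i) :
    (pmap i T σ τ hjn x : ℕ) = T.card + 1 + τ ⟨x, h, h2⟩ := by simp [pmap, h, h2]

private lemma pmap_inj (hiT : i ∉ T) (σ : ↥T ≃ Fin T.card)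
    (τ : {x : α // x ∉ T ∧ x ≠ i} ≃ Fin (Fintype.card α - 1 - T.card))
    (hjn : T.card + 1 ≤ Fintype.card α) : Function.Injective (pmap i T σ τ hjn) := by
  intro x y hxy
  have hval : (pmap i T σ τ hjn x : ℕ) = (pmap i T σ τ hjn y : ℕ) := congrArg Fin.val hxy
  by_cases hx : x ∈ T <;> by_cases hy : y ∈ T
  · rw [pmap_mem hx, pmap_mem hy] at hval
    have : (⟨x, hx⟩ : ↥T) = ⟨y, hy⟩ := σ.injective (Fin.ext hval)
    exact congrArg Subtype.val this
  · rw [pmap_mem hx] at hval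
    by_cases hy2 : y = i
    · subst hy2; rw [pmap_i hiT] at hval; have := (σ ⟨x, hx⟩).isLt; omega
    · rw [pmap_other hy hy2] at hval; have := (σ ⟨x, hx⟩).isLt; omega
  · rw [pmap_mem hy] at hval
    by_cases hx2 : x = i
    · subst hx2; rw [pmap_i hiT] at hval; have := (σ ⟨y, hy⟩).isLt; omega
    · rw [pmap_other hx hx2] at hval; have := (σ ⟨y, hy⟩).isLt; omega
  · by_cases hx2 : x = i <;> by_cases hy2 : y = i
    · rw [hx2, hy2]
    · subst hx2; rw [pmap_i hiT, pmap_other hy hy2] at hval; omega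
    · subst hy2; rw [pmap_i hiT, pmap_other hx hx2] at hval; omega
    · rw [pmap_other hx hx2, pmap_other hy hy2] at hval
      have : (⟨x, hx, hx2⟩ : {x : α // x ∉ T ∧ x ≠ i}) = ⟨y, hy, hy2⟩ :=
        τ.injective (Fin.ext (by omega))
      exact congrArg Subtype.val this

end Helpers

private lemma count_lt {α : Type*} [Fintype α] [DecidableEq α] {n : ℕ}
    (π : α ≃ Fin n) (k : Fin n) :
    (Finset.univ.filter (fun x => π x < k)).card = (k : ℕ) := by
  have h : Finset.univ.filter (fun x => π x < k) = (Finset.Iio k).image π.symm := by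
    ext x
    simp [Finset.mem_Iio, Finset.mem_image, Equiv.symm_apply_eq]
  rw [h, Finset.card_image_of_injective _ π.symm.injective, Fin.card_Iio]

private lemma card_pred_fiber {α : Type*} [Fintype α] [DecidableEq α] (i : α) (T : Finset α)
    (hiT : i ∉ T) :
    (Finset.univ.filter (fun π : α ≃ Fin (Fintype.card α) =>
      Finset.univ.filter (fun x => π x < π i) = T)).card
      = T.card.factorial * (Fintype.card α - 1 - T.card).factorial := by
  classical
  set n := Fintype.card α with hn
  set j := T.card with hj
  have hjn : j + 1 ≤ n := by
    have h1 : (insert i T).card = j + 1 := Finset.card_insert_of_notMem hiT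
    have h2 := Finset.card_le_univ (insert i T)
    omega
  have hT : Fintype.card ↥T = j := Fintype.card_coe T
  have hU : Fintype.card {x : α // x ∉ T ∧ x ≠ i} = n - 1 - j := by
    rw [Fintype.card_subtype]
    have h : Finset.univ.filter (fun x => x ∉ T ∧ x ≠ i) = (insert i T)ᶜ := by
      ext x; simp [not_or, and_comm]
    rw [h, Finset.card_compl, Finset.card_insert_of_notMem hiT]
    omega
  have hcardP : Fintype.card ((↥T ≃ Fin j) × ({x : α // x ∉ T ∧ x ≠ i} ≃ Fin (n - 1 - j)))
      = j.factorial * (n - 1 - j).factorial := by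
    rw [Fintype.card_prod,
      Fintype.card_equiv (Fintype.equivFinOfCardEq hT),
      Fintype.card_equiv (Fintype.equivFinOfCardEq hU), hT, hU]
  rw [← hcardP, ← Finset.card_univ (α := (↥T ≃ Fin j) × ({x : α // x ∉ T ∧ x ≠ i} ≃ Fin (n - 1 - j)))]
  -- facts about members of the fiber
  have hfib : ∀ (π : α ≃ Fin n), (Finset.univ.filter (fun x => π x < π i)) = T →
      ((π i : ℕ) = j ∧ ∀ x : α, (π x < π i ↔ x ∈ T)) := by
    intro π hπ
    have hiff : ∀ x : α, (π x < π i ↔ x ∈ T) := by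
      intro x
      rw [← hπ]; simp
    refine ⟨?_, hiff⟩
    rw [← count_lt π (π i), hπ]
  -- forward map: π ↦ (σ, τ)
  have hσbij : ∀ (π : α ≃ Fin n) (hπ : (Finset.univ.filter (fun x => π x < π i)) = T),
      Function.Bijective (fun x : ↥T => (⟨(π x.1 : ℕ), by
        have h1 := (hfib π hπ).1; have h2 := ((hfib π hπ).2 x.1).2 x.2
        omega⟩ : Fin j)) := by
    intro π hπ
    rw [Fintype.bijective_iff_injective_and_card]
    refine ⟨?_, by simp [hT]⟩
    intro x y hxy
    have h0 := congrArg Fin.val hxy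
    simp only at h0
    exact Subtype.ext (π.injective (Fin.ext h0))
  have hτbij : ∀ (π : α ≃ Fin n) (hπ : (Finset.univ.filter (fun x => π x < π i)) = T),
      Function.Bijective (fun x : {x : α // x ∉ T ∧ x ≠ i} => (⟨(π x.1 : ℕ) - (j + 1), by
        obtain ⟨h1, h2⟩ := hfib π hπ
        have h3 : ¬ (π x.1 < π i) := fun hc => x.2.1 ((h2 x.1).1 hc)
        have h4 : π x.1 ≠ π i := fun hc => x.2.2 (π.injective hc)
        have h5 := (π x.1).isLt
        have h6 : (π i : ℕ) ≤ (π x.1 : ℕ) := not_lt.1 h3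
        have h7 : (π i : ℕ) ≠ (π x.1 : ℕ) := fun hc => h4 (Fin.ext hc.symm)
        omega⟩ : Fin (n - 1 - j))) := by
    intro π hπ
    rw [Fintype.bijective_iff_injective_and_card]
    refine ⟨?_, by simp [hU]⟩
    intro x y hxy
    obtain ⟨h1, h2⟩ := hfib π hπ
    have hx : (j + 1) ≤ (π x.1 : ℕ) := by
      have h3 : ¬ (π x.1 < π i) := fun hc => x.2.1 ((h2 x.1).1 hc)
      have h4 : (π x.1 : ℕ) ≠ (π i : ℕ) := fun hc => x.2.2 (π.injective (Fin.ext hc))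
      have h6 : (π i : ℕ) ≤ (π x.1 : ℕ) := not_lt.1 h3
      omega
    have hy : (j + 1) ≤ (π y.1 : ℕ) := by
      have h3 : ¬ (π y.1 < π i) := fun hc => y.2.1 ((h2 y.1).1 hc)
      have h4 : (π y.1 : ℕ) ≠ (π i : ℕ) := fun hc => y.2.2 (π.injective (Fin.ext hc))
      have h6 : (π i : ℕ) ≤ (π y.1 : ℕ) := not_lt.1 h3
      omega
    have h0 := congrArg Fin.val hxy
    simp only at h0
    exact Subtype.ext (π.injective (Fin.ext (by omega)))
  -- backward map: (σ, τ) ↦ permutation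
  have hpbij : ∀ st : (↥T ≃ Fin j) × ({x : α // x ∉ T ∧ x ≠ i} ≃ Fin (n - 1 - j)),
      Function.Bijective (pmap i T st.1 st.2 hjn) := by
    intro st
    rw [Fintype.bijective_iff_injective_and_card]
    exact ⟨pmap_inj hiT st.1 st.2 hjn, by simp [Fintype.card_fin]⟩
  refine Finset.card_bij'
    (fun π hπ => (Equiv.ofBijective _ (hσbij π (by simpa using hπ)),
                  Equiv.ofBijective _ (hτbij π (by simpa using hπ))))
    (fun st _ => Equiv.ofBijective (pmap i T st.1 st.2 hjn) (hpbij st))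
    (fun _ _ => Finset.mem_univ _) ?_ ?_ ?_
  · -- pmap lands in the fiber
    intro st _
    simp only [Finset.mem_filter, Finset.mem_univ, true_and]
    ext x
    simp only [Finset.mem_filter, Finset.mem_univ, true_and, Equiv.ofBijective_apply]
    rw [Fin.lt_iff_val_lt_val]
    constructor
    · intro hlt
      by_contra hx
      by_cases hx2 : x = i
      · subst hx2; exact lt_irrefl _ hlt
      · rw [pmap_other hx hx2, pmap_i hiT] at hlt; omega
    · intro hx
      rw [pmap_mem hx, pmap_i hiT]
      exact (st.1 ⟨x, hx⟩).isLt
  · -- left inverse : pmap of (σ π, τ π) = π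
    intro π hπ
    have hπ' : (Finset.univ.filter (fun x => π x < π i)) = T := by simpa using hπ
    obtain ⟨h1, h2⟩ := hfib π hπ'
    ext x
    simp only [Equiv.ofBijective_apply]
    by_cases hx : x ∈ T
    · rw [pmap_mem hx]
      simp [Equiv.ofBijective_apply]
    · by_cases hx2 : x = i
      · subst hx2; rw [pmap_i hiT]; omega
      · rw [pmap_other hx hx2]
        simp only [Equiv.ofBijective_apply]
        have h3 : ¬ (π x < π i) := fun hc => hx ((h2 x).1 hc)
        have h6 : (π i : ℕ) ≤ (π x : ℕ) := not_lt.1 h3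
        have h7 : (π x : ℕ) ≠ (π i : ℕ) := fun hc => hx2 (π.injective (Fin.ext hc))
        omega
  · -- right inverse : (σ, τ) of pmap = (σ, τ)
    intro st _
    have hmem : (Finset.univ.filter (fun x =>
        (Equiv.ofBijective (pmap i T st.1 st.2 hjn) (hpbij st)) x
          < (Equiv.ofBijective (pmap i T st.1 st.2 hjn) (hpbij st)) i)) = T := by
      ext x
      simp only [Finset.mem_filter, Finset.mem_univ, true_and, Equiv.ofBijective_apply]
      rw [Fin.lt_iff_val_lt_val]
      constructor
      · intro hlt
        by_contra hx
        by_cases hx2 : x = i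
        · subst hx2; exact lt_irrefl _ hlt
        · rw [pmap_other hx hx2, pmap_i hiT] at hlt; omega
      · intro hx
        rw [pmap_mem hx, pmap_i hiT]
        exact (st.1 ⟨x, hx⟩).isLt
    refine Prod.ext ?_ ?_
    · apply Equiv.ext
      intro x
      apply Fin.ext
      simp only [Equiv.ofBijective_apply]
      exact pmap_mem x.2
    · apply Equiv.ext
      intro x
      apply Fin.ext
      simp only [Equiv.ofBijective_apply]
      rw [pmap_other x.2.1 x.2.2, Nat.add_sub_cancel_left]

private lemma shapley_core {α : Type*} [Fintype α] [DecidableEq α] (A B : Finset α) (i : α)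
    (hAB : Disjoint A B) (hiA : i ∉ A) (hiB : i ∉ B)
    (hcover : A ∪ B ∪ {i} = Finset.univ)
    (v : Finset α → ℝ) (w : ℕ → ℕ → Bool → ℝ)
    (hv : ∀ S : Finset α, v S = w (S ∩ A).card (S ∩ B).card (decide (i ∈ S))) :
    ((∑ π : α ≃ Fin (Fintype.card α),
        (v (Finset.univ.filter (fun x => π x < π i) ∪ {i}) -
         v (Finset.univ.filter (fun x => π x < π i)))) /
      (Fintype.card α).factorial =
      ∑ a ∈ Finset.range (A.card + 1), ∑ b ∈ Finset.range (B.card + 1),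
        (1 / (Fintype.card α : ℝ)) * ((Fintype.card α - 1).choose (a + b) : ℝ)⁻¹ *
          (A.card.choose a : ℝ) * (B.card.choose b : ℝ) * (w a b true - w a b false)) := by
  classical
  set n := Fintype.card α with hn
  set p := A.card with hp
  set q := B.card with hq
  have hiAB : i ∉ A ∪ B := by simp [hiA, hiB]
  have hdisj : Disjoint (A ∪ B) ({i} : Finset α) := by
    simp [Finset.disjoint_singleton_right, hiA, hiB]
  have hnpq : n = p + q + 1 := by
    rw [hn, ← Finset.card_univ, ← hcover, Finset.card_union_of_disjoint hdisj,
      Finset.card_union_of_disjoint hAB, Finset.card_singleton]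
  -- the contribution of a coalition
  set F : Finset α → ℝ := fun T => v (T ∪ {i}) - v T with hF
  -- value of F on coalitions T ⊆ A ∪ B
  have hFval : ∀ T ∈ (A ∪ B).powerset, F T = w (T ∩ A).card (T ∩ B).card true
      - w (T ∩ A).card (T ∩ B).card false := by
    intro T hT
    rw [Finset.mem_powerset] at hT
    have hiT : i ∉ T := fun h => hiAB (hT h)
    have h1 : (T ∪ {i}) ∩ A = T ∩ A := by
      rw [Finset.union_inter_distrib_right]
      simp [Finset.singleton_inter_of_notMem hiA]
    have h2 : (T ∪ {i}) ∩ B = T ∩ B := by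
      rw [Finset.union_inter_distrib_right]
      simp [Finset.singleton_inter_of_notMem hiB]
    rw [hF]
    simp only [hv, h1, h2]
    have h3 : i ∈ T ∪ {i} := by simp
    simp [h3, hiT]
  -- step 1 : sum over permutations = sum over coalitions
  have step1 : (∑ π : α ≃ Fin n,
      (v (Finset.univ.filter (fun x => π x < π i) ∪ {i}) -
       v (Finset.univ.filter (fun x => π x < π i))))
      = ∑ T ∈ (A ∪ B).powerset,
          ((T.card.factorial * (n - 1 - T.card).factorial : ℕ) : ℝ) * F T := by
    rw [← Finset.sum_fiberwise_of_maps_to (g := fun π : α ≃ Fin n =>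
        Finset.univ.filter (fun x => π x < π i)) (t := (A ∪ B).powerset)
        (fun π _ => by
          rw [Finset.mem_powerset]
          intro x hx
          rw [Finset.mem_filter] at hx
          have hxi : x ≠ i := by
            rintro rfl
            exact lt_irrefl _ hx.2
          have := Finset.mem_univ x
          rw [← hcover] at this
          simp only [Finset.mem_union, Finset.mem_singleton] at this
          rcases this with h | h
          · simpa using h
          · exact absurd h hxi)
        (fun π => v (Finset.univ.filter (fun x => π x < π i) ∪ {i}) -
           v (Finset.univ.filter (fun x => π x < π i)))]
    refine Finset.sum_congr rfl fun T hT => ?_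
    have hiT : i ∉ T := fun h => hiAB ((Finset.mem_powerset.1 hT) h)
    have hconst : ∀ π ∈ Finset.univ.filter (fun π : α ≃ Fin n =>
        Finset.univ.filter (fun x => π x < π i) = T),
        (v (Finset.univ.filter (fun x => π x < π i) ∪ {i}) -
         v (Finset.univ.filter (fun x => π x < π i))) = F T := by
      intro π hπ
      rw [Finset.mem_filter] at hπ
      rw [hπ.2]
    rw [Finset.sum_congr rfl hconst, Finset.sum_const,
      card_pred_fiber i T hiT, nsmul_eq_mul]
  -- step 2 : group coalitions by the pair of intersections' cardinalities
  have countTA : ∀ T ∈ (A ∪ B).powerset, T.card = (T ∩ A).card + (T ∩ B).card := by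
    intro T hT
    rw [Finset.mem_powerset] at hT
    have h1 : T ∩ (A ∪ B) = T := Finset.inter_eq_left.mpr hT
    have h2 : Disjoint (T ∩ A) (T ∩ B) :=
      hAB.mono (Finset.inter_subset_right) (Finset.inter_subset_right)
    rw [← Finset.card_union_of_disjoint h2, ← Finset.inter_union_distrib_left, h1]
  have count : ∀ a b, ((A ∪ B).powerset.filter
      (fun T => ((T ∩ A).card, (T ∩ B).card) = (a, b))).card = p.choose a * q.choose b := by
    intro a b
    rw [← Finset.card_powersetCard a A, ← Finset.card_powersetCard b B, ← Finset.card_product]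
    refine Finset.card_bij' (fun T _ => (T ∩ A, T ∩ B)) (fun P _ => P.1 ∪ P.2) ?_ ?_ ?_ ?_
    · intro T hT
      simp only [Finset.mem_filter, Finset.mem_powerset, Prod.mk.injEq] at hT
      simp only [Finset.mem_product, Finset.mem_powersetCard]
      exact ⟨⟨Finset.inter_subset_right, hT.2.1⟩, ⟨Finset.inter_subset_right, hT.2.2⟩⟩
    · intro P hP
      simp only [Finset.mem_product, Finset.mem_powersetCard] at hP
      obtain ⟨⟨hPA, hPa⟩, ⟨hPB, hPb⟩⟩ := hP
      have d1 : P.2 ∩ A = ∅ := Finset.disjoint_iff_inter_eq_empty.mp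
        (Finset.disjoint_of_subset_left hPB hAB.symm)
      have d2 : P.1 ∩ B = ∅ := Finset.disjoint_iff_inter_eq_empty.mp
        (Finset.disjoint_of_subset_left hPA hAB)
      have e1 : (P.1 ∪ P.2) ∩ A = P.1 := by
        rw [Finset.union_inter_distrib_right, Finset.inter_eq_left.mpr hPA, d1,
          Finset.union_empty]
      have e2 : (P.1 ∪ P.2) ∩ B = P.2 := by
        rw [Finset.union_inter_distrib_right, Finset.inter_eq_left.mpr hPB, d2,
          Finset.empty_union]
      simp only [Finset.mem_filter, Finset.mem_powerset, Prod.mk.injEq]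
      exact ⟨Finset.union_subset_union hPA hPB, by rw [e1, hPa], by rw [e2, hPb]⟩
    · intro T hT
      simp only [Finset.mem_filter, Finset.mem_powerset] at hT
      show T ∩ A ∪ T ∩ B = T
      rw [← Finset.inter_union_distrib_left, Finset.inter_eq_left.mpr hT.1]
    · intro P hP
      simp only [Finset.mem_product, Finset.mem_powersetCard] at hP
      obtain ⟨⟨hPA, _⟩, ⟨hPB, _⟩⟩ := hP
      have d1 : P.2 ∩ A = ∅ := Finset.disjoint_iff_inter_eq_empty.mp
        (Finset.disjoint_of_subset_left hPB hAB.symm)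
      have d2 : P.1 ∩ B = ∅ := Finset.disjoint_iff_inter_eq_empty.mp
        (Finset.disjoint_of_subset_left hPA hAB)
      have e1 : (P.1 ∪ P.2) ∩ A = P.1 := by
        rw [Finset.union_inter_distrib_right, Finset.inter_eq_left.mpr hPA, d1,
          Finset.union_empty]
      have e2 : (P.1 ∪ P.2) ∩ B = P.2 := by
        rw [Finset.union_inter_distrib_right, Finset.inter_eq_left.mpr hPB, d2,
          Finset.empty_union]
      show ((P.1 ∪ P.2) ∩ A, (P.1 ∪ P.2) ∩ B) = P
      rw [e1, e2]
  have step2 : ∑ T ∈ (A ∪ B).powerset,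
        ((T.card.factorial * (n - 1 - T.card).factorial : ℕ) : ℝ) * F T
      = ∑ ab ∈ Finset.range (p + 1) ×ˢ Finset.range (q + 1),
          ((p.choose ab.1 * q.choose ab.2 : ℕ) : ℝ) *
          (((ab.1 + ab.2).factorial * (n - 1 - (ab.1 + ab.2)).factorial : ℕ) : ℝ) *
          (w ab.1 ab.2 true - w ab.1 ab.2 false) := by
    rw [← Finset.sum_fiberwise_of_maps_to (g := fun T : Finset α =>
        ((T ∩ A).card, (T ∩ B).card)) (t := Finset.range (p + 1) ×ˢ Finset.range (q + 1))
        (fun T hT => by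
          rw [Finset.mem_powerset] at hT
          simp only [Finset.mem_product, Finset.mem_range]
          constructor
          · have : (T ∩ A).card ≤ p := Finset.card_le_card Finset.inter_subset_right
            omega
          · have : (T ∩ B).card ≤ q := Finset.card_le_card Finset.inter_subset_right
            omega)]
    refine Finset.sum_congr rfl fun ab hab => ?_
    have hconst : ∀ T ∈ (A ∪ B).powerset.filter
        (fun T => ((T ∩ A).card, (T ∩ B).card) = (ab.1, ab.2)),
        ((T.card.factorial * (n - 1 - T.card).factorial : ℕ) : ℝ) * F T
          = (((ab.1 + ab.2).factorial * (n - 1 - (ab.1 + ab.2)).factorial : ℕ) : ℝ) *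
            (w ab.1 ab.2 true - w ab.1 ab.2 false) := by
      intro T hT
      rw [Finset.mem_filter] at hT
      obtain ⟨hT1, hT2⟩ := hT
      have h1 : (T ∩ A).card = ab.1 := (Prod.mk.injEq .. ▸ hT2 : _ ∧ _).1
      have h2 : (T ∩ B).card = ab.2 := (Prod.mk.injEq .. ▸ hT2 : _ ∧ _).2
      rw [hFval T hT1, countTA T hT1, h1, h2]
    have hfil : (A ∪ B).powerset.filter
        (fun T => ((T ∩ A).card, (T ∩ B).card) = ab)
        = (A ∪ B).powerset.filter
        (fun T => ((T ∩ A).card, (T ∩ B).card) = (ab.1, ab.2)) := by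
      congr
    rw [hfil, Finset.sum_congr rfl hconst, Finset.sum_const, count ab.1 ab.2, nsmul_eq_mul]
    push_cast
    ring
  rw [step1, step2, Finset.sum_div, Finset.sum_product]
  refine Finset.sum_congr rfl fun a ha => Finset.sum_congr rfl fun b hb => ?_
  rw [Finset.mem_range] at ha hb
  -- the coefficient identity
  have hk : a + b ≤ n - 1 := by omega
  have hC := Nat.choose_mul_factorial_mul_factorial hk
  have hCpos : 0 < (n - 1).choose (a + b) := Nat.choose_pos hk
  have hnf : (n.factorial : ℝ) = n * (n - 1).factorial := by
    have h : n.factorial = n * (n - 1).factorial := by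
      conv_lhs => rw [show n = (n - 1) + 1 by omega]
      rw [Nat.factorial_succ]
      congr 1
      omega
    exact_mod_cast h
  have hfacts : ((a + b).factorial * (n - 1 - (a + b)).factorial : ℝ)
      = ((n - 1).factorial : ℝ) / ((n - 1).choose (a + b) : ℝ) := by
    rw [eq_div_iff (by exact_mod_cast hCpos.ne')]
    push_cast [← hC]
    ring
  have hne1 : ((n : ℝ)) ≠ 0 := by
    have : 0 < n := by omega
    exact_mod_cast this.ne'
  have hne2 : (((n - 1).choose (a + b) : ℕ) : ℝ) ≠ 0 := by exact_mod_cast hCpos.ne'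
  have hne3 : (((n - 1).factorial : ℕ) : ℝ) ≠ 0 := by
    exact_mod_cast (Nat.factorial_pos (n - 1)).ne'
  push_cast
  rw [hfacts, hnf]
  field_simp

/-- If `v` on `N = A ⊎ B ⊎ {i}` depends only on `(|S ∩ A|, |S ∩ B|, i ∈ S)` via `w`,
then the Shapley value of `i` equals the weighted sum of `w a b true − w a b false`
with weights `(1/n)·C(n−1,a+b)⁻¹·C(|A|,a)·C(|B|,b)`, and these weights sum to one. -/
theorem stmt16 {α : Type*} [Fintype α] [DecidableEq α] (A B : Finset α) (i : α)
    (hAB : Disjoint A B) (hiA : i ∉ A) (hiB : i ∉ B)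
    (hcover : A ∪ B ∪ {i} = Finset.univ)
    (v : Finset α → ℝ) (w : ℕ → ℕ → Bool → ℝ)
    (hv : ∀ S : Finset α, v S = w (S ∩ A).card (S ∩ B).card (decide (i ∈ S))) :
    ((∑ π : α ≃ Fin (Fintype.card α),
        (v (Finset.univ.filter (fun x => π x < π i) ∪ {i}) -
         v (Finset.univ.filter (fun x => π x < π i)))) /
      (Fintype.card α).factorial =
      ∑ a ∈ Finset.range (A.card + 1), ∑ b ∈ Finset.range (B.card + 1),
        (1 / (Fintype.card α : ℝ)) * ((Fintype.card α - 1).choose (a + b) : ℝ)⁻¹ *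
          (A.card.choose a : ℝ) * (B.card.choose b : ℝ) * (w a b true - w a b false)) ∧
    (∑ a ∈ Finset.range (A.card + 1), ∑ b ∈ Finset.range (B.card + 1),
        (1 / (Fintype.card α : ℝ)) * ((Fintype.card α - 1).choose (a + b) : ℝ)⁻¹ *
          (A.card.choose a : ℝ) * (B.card.choose b : ℝ)) = 1 := by
  constructor
  · exact shapley_core A B i hAB hiA hiB hcover v w hv
  · have h2 := shapley_core A B i hAB hiA hiB hcover
      (fun S => if i ∈ S then (1 : ℝ) else 0) (fun _ _ t => if t then (1 : ℝ) else 0)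
      (by intro S; by_cases h : i ∈ S <;> simp [h])
    have hL : (∑ π : α ≃ Fin (Fintype.card α),
        ((fun S => if i ∈ S then (1 : ℝ) else 0)
            (Finset.univ.filter (fun x => π x < π i) ∪ {i}) -
         (fun S => if i ∈ S then (1 : ℝ) else 0)
            (Finset.univ.filter (fun x => π x < π i))))
        = ((Fintype.card α).factorial : ℝ) := by
      have hterm : ∀ π : α ≃ Fin (Fintype.card α),
          ((fun S => if i ∈ S then (1 : ℝ) else 0)
              (Finset.univ.filter (fun x => π x < π i) ∪ {i}) -
           (fun S => if i ∈ S then (1 : ℝ) else 0)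
              (Finset.univ.filter (fun x => π x < π i))) = 1 := by
        intro π
        have h1 : i ∈ Finset.univ.filter (fun x => π x < π i) ∪ {i} := by simp
        have h0 : i ∉ Finset.univ.filter (fun x => π x < π i) := by simp
        simp [h1, h0]
      rw [Finset.sum_congr rfl (fun π _ => hterm π), Finset.sum_const, Finset.card_univ,
        Fintype.card_equiv (Fintype.equivFin α), nsmul_eq_mul, mul_one]
    rw [hL, div_self (by exact_mod_cast (Nat.factorial_pos (Fintype.card α)).ne')] at h2
    refine Eq.trans ?_ h2.symm
    refine Finset.sum_congr rfl fun a _ => Finset.sum_congr rfl fun b _ => ?_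
    simp
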